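/- Let N ≥ 1 and suppose (D_k)_{k≥0} are N×N real symmetric matrices and (E_k)_{k≥0} are N×N real matrices such that for some κ ≥ 1, δ ∈ [0,1), and θ ∈ [0,(1−δ)/2], one has ‖D_k − κ·I‖ ≤ κδ and ‖E_k‖ ≤ κθ for all k ≥ 0. Define recursively Q_0 = D_0 and Q_k = D_k − E_{k−1}Q_{k−1}^{−1}E_{k−1}ᵀ for k ≥ 1. Then every Q_k is invertible (so the recursion is well-defined) and, with ε = (1+δ)/2 − √((1−δ)²/4 − θ²), one has ε < 1 and ‖Q_k − κ·I‖ ≤ κε for all k ≥ 0. -/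

import Mathlib

open Matrix

/-- Euclidean (ℓ²) norm of a vector in ℝ^n. -/
noncomputable def vecNorm {n : Type*} [Fintype n] (v : n → ℝ) : ℝ :=
  Real.sqrt (∑ i, v i ^ 2)

/-- Spectral norm (largest singular value) of a real matrix, defined as the operator
norm: the supremum of `‖A x‖₂` over unit vectors `x`. -/
noncomputable def matSpectralNorm {m n : Type*} [Fintype m] [Fintype n]
    (A : Matrix m n ℝ) : ℝ :=
  sSup ((fun x => vecNorm (A.mulVec x)) '' {x | vecNorm x = 1})

/-- The recursion `Q₀ = D₀`, `Q_{k+1} = D_{k+1} − E_k Q_k⁻¹ E_kᵀ`, stated with the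
(total) matrix inverse; the invertibility of each `Q_k` is part of the claim below. -/
noncomputable def Qrec {N : ℕ} (D E : ℕ → Matrix (Fin N) (Fin N) ℝ) :
    ℕ → Matrix (Fin N) (Fin N) ℝ
  | 0 => D 0
  | k + 1 => D (k + 1) - E k * (Qrec D E k)⁻¹ * (E k)ᵀ

open scoped Matrix.Norms.L2Operator

lemma vecNorm_eq_norm {N : ℕ} (v : Fin N → ℝ) :
    vecNorm v = ‖((WithLp.equiv 2 (Fin N → ℝ)).symm v : EuclideanSpace ℝ (Fin N))‖ := by
  rw [EuclideanSpace.norm_eq]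
  simp [vecNorm, Real.norm_eq_abs, sq_abs]

set_option maxHeartbeats 1000000 in
set_option synthInstance.maxHeartbeats 400000 in
lemma matSpectralNorm_eq_norm {N : ℕ} (hN : 1 ≤ N) (A : Matrix (Fin N) (Fin N) ℝ) :
    matSpectralNorm A = ‖A‖ := by
  classical
  set f : EuclideanSpace ℝ (Fin N) →L[ℝ] EuclideanSpace ℝ (Fin N) :=
    Matrix.toEuclideanCLM (𝕜 := ℝ) A with hf
  have hAf : ‖A‖ = ‖f‖ := Matrix.cstar_norm_def A
  have hset : ((fun x => vecNorm (A.mulVec x)) '' {x | vecNorm x = 1}) =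
      ((fun x : EuclideanSpace ℝ (Fin N) => ‖f x‖) '' {x | ‖x‖ = 1}) := by
    ext r
    constructor
    · rintro ⟨v, hv, rfl⟩
      refine ⟨(WithLp.equiv 2 (Fin N → ℝ)).symm v, by
        show _ = _; rw [← vecNorm_eq_norm]; exact hv, ?_⟩
      have h1 : f ((WithLp.equiv 2 (Fin N → ℝ)).symm v)
          = (WithLp.equiv 2 (Fin N → ℝ)).symm (A.mulVec v) := rfl
      show ‖f ((WithLp.equiv 2 (Fin N → ℝ)).symm v)‖ = vecNorm (A.mulVec v)
      rw [h1, ← vecNorm_eq_norm]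
    · rintro ⟨x, hx, rfl⟩
      refine ⟨WithLp.equiv 2 (Fin N → ℝ) x, ?_, ?_⟩
      · simpa [vecNorm_eq_norm] using hx
      · have h1 : f x = (WithLp.equiv 2 (Fin N → ℝ)).symm
            (A.mulVec (WithLp.equiv 2 (Fin N → ℝ) x)) := rfl
        show vecNorm (A.mulVec (WithLp.equiv 2 (Fin N → ℝ) x)) = ‖f x‖
        rw [vecNorm_eq_norm, ← h1]
  rw [matSpectralNorm, hset, hAf]
  set T := ((fun x : EuclideanSpace ℝ (Fin N) => ‖f x‖) '' {x | ‖x‖ = 1}) with hT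
  have i0 : Fin N := ⟨0, hN⟩
  have hx0 : ‖(EuclideanSpace.single i0 (1 : ℝ) : EuclideanSpace ℝ (Fin N))‖ = 1 := by
    rw [EuclideanSpace.norm_single]; norm_num
  have hmem : ‖f (EuclideanSpace.single i0 (1 : ℝ))‖ ∈ T := ⟨_, hx0, rfl⟩
  have hbdd : BddAbove T := by
    refine ⟨‖f‖, ?_⟩
    rintro r ⟨x, hx, rfl⟩
    simpa [show ‖x‖ = 1 from hx] using f.le_opNorm x
  have hne : T.Nonempty := ⟨_, hmem⟩
  apply le_antisymm
  · refine csSup_le hne ?_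
    rintro r ⟨x, hx, rfl⟩
    simpa [show ‖x‖ = 1 from hx] using f.le_opNorm x
  · refine f.opNorm_le_bound (le_trans (norm_nonneg _) (le_csSup hbdd hmem)) fun x => ?_
    by_cases hx : x = 0
    · simp [hx]
    · have hxn : (0 : ℝ) < ‖x‖ := norm_pos_iff.mpr hx
      have hy1 : ‖(‖x‖⁻¹ • x : EuclideanSpace ℝ (Fin N))‖ = 1 := by
        rw [norm_smul, norm_inv, norm_norm, inv_mul_cancel₀ hxn.ne']
      have hfy : ‖f (‖x‖⁻¹ • x)‖ ≤ sSup T := le_csSup hbdd ⟨_, hy1, rfl⟩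
      have : ‖f (‖x‖⁻¹ • x)‖ = ‖x‖⁻¹ * ‖f x‖ := by
        rw [_root_.map_smul, norm_smul, norm_inv, norm_norm]
      rw [this] at hfy
      calc ‖f x‖ = ‖x‖ * (‖x‖⁻¹ * ‖f x‖) := by field_simp
        _ ≤ sSup T * ‖x‖ := by
            rw [mul_comm]
            exact mul_le_mul_of_nonneg_right hfy hxn.le

set_option maxHeartbeats 1000000 in
set_option synthInstance.maxHeartbeats 400000 in
/-- if `‖D_k − κI‖ ≤ κδ` and `‖E_k‖ ≤ κθ` with `κ ≥ 1`, `δ ∈ [0,1)`,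
`θ ∈ [0,(1−δ)/2]`, then every `Q_k` is invertible and `‖Q_k − κI‖ ≤ κε` with
`ε = (1+δ)/2 − √((1−δ)²/4 − θ²) < 1`. -/
theorem Q_conditioning (N : ℕ) (hN : 1 ≤ N)
    (D E : ℕ → Matrix (Fin N) (Fin N) ℝ) (hDsym : ∀ k, (D k)ᵀ = D k)
    (κ δ θ : ℝ) (hκ : 1 ≤ κ) (hδ0 : 0 ≤ δ) (hδ1 : δ < 1)
    (hθ0 : 0 ≤ θ) (hθ : θ ≤ (1 - δ) / 2)
    (hD : ∀ k, matSpectralNorm (D k - κ • (1 : Matrix (Fin N) (Fin N) ℝ)) ≤ κ * δ)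
    (hE : ∀ k, matSpectralNorm (E k) ≤ κ * θ)
    (ε : ℝ) (hε : ε = (1 + δ) / 2 - Real.sqrt ((1 - δ) ^ 2 / 4 - θ ^ 2)) :
    ε < 1 ∧ ∀ k, IsUnit (Qrec D E k) ∧
      matSpectralNorm (Qrec D E k - κ • (1 : Matrix (Fin N) (Fin N) ℝ)) ≤ κ * ε := by
  classical
  haveI : CompleteSpace (Matrix (Fin N) (Fin N) ℝ) := FiniteDimensional.complete ℝ _
  have hκ0 : (0 : ℝ) < κ := lt_of_lt_of_le one_pos hκ
  -- arithmetic about ε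
  set s : ℝ := Real.sqrt ((1 - δ) ^ 2 / 4 - θ ^ 2) with hs
  have hθb : θ ^ 2 ≤ (1 - δ) ^ 2 / 4 := by nlinarith
  have hs0 : 0 ≤ s := Real.sqrt_nonneg _
  have hs2 : s ^ 2 = (1 - δ) ^ 2 / 4 - θ ^ 2 := Real.sq_sqrt (by linarith)
  have hsb : s ≤ (1 - δ) / 2 := by
    have : s ≤ Real.sqrt ((1 - δ) ^ 2 / 4) := Real.sqrt_le_sqrt (by nlinarith)
    have h2 : Real.sqrt ((1 - δ) ^ 2 / 4) = (1 - δ) / 2 := by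
      rw [show (1 - δ) ^ 2 / 4 = ((1 - δ) / 2) ^ 2 by ring, Real.sqrt_sq (by linarith)]
    linarith [h2 ▸ this]
  have hεδ : δ ≤ ε := by rw [hε]; linarith
  have hε1 : ε < 1 := by rw [hε]; linarith
  have hε0 : 0 ≤ ε := le_trans hδ0 hεδ
  have key : (ε - δ) * (1 - ε) = θ ^ 2 := by
    rw [hε]; linear_combination (-1 : ℝ) * hs2
  have h1ε : (0 : ℝ) < 1 - ε := by linarith
  -- norm of identity
  haveI : Nontrivial (EuclideanSpace ℝ (Fin N)) := by
    refine nontrivial_of_ne (EuclideanSpace.single ⟨0, hN⟩ (1 : ℝ)) 0 ?_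
    intro h
    have := congrArg norm h
    rw [EuclideanSpace.norm_single] at this
    simp at this
  have hnorm1 : ‖(1 : Matrix (Fin N) (Fin N) ℝ)‖ = 1 := by
    rw [Matrix.cstar_norm_def, _root_.map_one]
    exact norm_one
  -- translated hypotheses
  have hD' : ∀ k, ‖D k - κ • (1 : Matrix (Fin N) (Fin N) ℝ)‖ ≤ κ * δ := fun k =>
    (matSpectralNorm_eq_norm hN _) ▸ hD k
  have hE' : ∀ k, ‖E k‖ ≤ κ * θ := fun k => (matSpectralNorm_eq_norm hN _) ▸ hE k
  -- invertibility lemma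
  have invlem : ∀ M : Matrix (Fin N) (Fin N) ℝ,
      ‖M - κ • (1 : Matrix (Fin N) (Fin N) ℝ)‖ ≤ κ * ε →
      IsUnit M ∧ ‖M⁻¹‖ ≤ (κ * (1 - ε))⁻¹ := by
    intro M hM
    set t : Matrix (Fin N) (Fin N) ℝ := κ⁻¹ • (κ • (1 : Matrix (Fin N) (Fin N) ℝ) - M)
      with htdef
    have h1t : (1 : Matrix (Fin N) (Fin N) ℝ) - t = κ⁻¹ • M := by
      rw [htdef, smul_sub, smul_smul, inv_mul_cancel₀ hκ0.ne', one_smul, sub_sub_cancel]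
    have ht : ‖t‖ ≤ ε := by
      have : ‖t‖ = κ⁻¹ * ‖κ • (1 : Matrix (Fin N) (Fin N) ℝ) - M‖ := by
        rw [htdef, norm_smul, Real.norm_eq_abs, abs_of_pos (inv_pos.mpr hκ0)]
      rw [this, norm_sub_rev]
      calc κ⁻¹ * ‖M - κ • (1 : Matrix (Fin N) (Fin N) ℝ)‖ ≤ κ⁻¹ * (κ * ε) :=
            mul_le_mul_of_nonneg_left hM (inv_pos.mpr hκ0).le
        _ = ε := by field_simp
    have ht1 : ‖t‖ < 1 := lt_of_le_of_lt ht hε1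
    set u : (Matrix (Fin N) (Fin N) ℝ)ˣ := Units.oneSub t ht1 with hu
    have huval : (↑u : Matrix (Fin N) (Fin N) ℝ) = κ⁻¹ • M := h1t
    have hMu : M = κ • (↑u : Matrix (Fin N) (Fin N) ℝ) := by
      rw [huval, smul_smul, mul_inv_cancel₀ hκ0.ne', one_smul]
    have hunit : IsUnit M := by
      rw [hMu]
      exact (Units.isUnit u).smul (Units.mk0 κ hκ0.ne')
    refine ⟨hunit, ?_⟩
    have hinv : M⁻¹ = κ⁻¹ • (↑u⁻¹ : Matrix (Fin N) (Fin N) ℝ) := by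
      apply Matrix.inv_eq_left_inv
      rw [hMu, Matrix.smul_mul, Matrix.mul_smul, smul_smul, inv_mul_cancel₀ hκ0.ne',
        one_smul, u.inv_mul]
    have huinv : (↑u⁻¹ : Matrix (Fin N) (Fin N) ℝ) = ∑' n : ℕ, t ^ n := rfl
    have hbound : ‖(↑u⁻¹ : Matrix (Fin N) (Fin N) ℝ)‖ ≤ (1 - ε)⁻¹ := by
      rw [huinv]
      have h1 := tsum_geometric_le_of_norm_lt_one t ht1
      rw [hnorm1] at h1
      have h2 : (1 - ‖t‖)⁻¹ ≤ (1 - ε)⁻¹ := by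
        apply inv_anti₀ h1ε
        linarith
      linarith
    rw [hinv, norm_smul, Real.norm_eq_abs, abs_of_pos (inv_pos.mpr hκ0), mul_inv]
    exact mul_le_mul_of_nonneg_left hbound (inv_pos.mpr hκ0).le
  -- main induction
  have main : ∀ k, ‖Qrec D E k - κ • (1 : Matrix (Fin N) (Fin N) ℝ)‖ ≤ κ * ε := by
    intro k
    induction k with
    | zero =>
        have : Qrec D E 0 = D 0 := rfl
        rw [this]
        calc ‖D 0 - κ • (1 : Matrix (Fin N) (Fin N) ℝ)‖ ≤ κ * δ := hD' 0
          _ ≤ κ * ε := mul_le_mul_of_nonneg_left hεδ hκ0.le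
    | succ k ih =>
        obtain ⟨-, hQinv⟩ := invlem _ ih
        have hstep : Qrec D E (k + 1)
            = D (k + 1) - E k * (Qrec D E k)⁻¹ * (E k)ᵀ := rfl
        have hET : ‖(E k)ᵀ‖ = ‖E k‖ := by
          have : (E k)ᴴ = (E k)ᵀ := by
            ext i j
            simp [Matrix.conjTranspose_apply]
          rw [← this, Matrix.l2_opNorm_conjTranspose]
        have hprod : ‖E k * (Qrec D E k)⁻¹ * (E k)ᵀ‖
            ≤ (κ * θ) * ((κ * (1 - ε))⁻¹ * (κ * θ)) := by
          calc ‖E k * (Qrec D E k)⁻¹ * (E k)ᵀ‖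
              ≤ ‖E k * (Qrec D E k)⁻¹‖ * ‖(E k)ᵀ‖ := Matrix.l2_opNorm_mul _ _
            _ ≤ ‖E k‖ * ‖(Qrec D E k)⁻¹‖ * ‖(E k)ᵀ‖ :=
                mul_le_mul_of_nonneg_right (Matrix.l2_opNorm_mul _ _) (norm_nonneg _)
            _ ≤ (κ * θ) * ((κ * (1 - ε))⁻¹ * (κ * θ)) := by
                rw [hET, mul_assoc]
                have h1 : (0:ℝ) ≤ κ * θ := by positivity
                have h2 : (0:ℝ) ≤ (κ * (1 - ε))⁻¹ := by positivity
                exact mul_le_mul (hE' k)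
                  (mul_le_mul hQinv (hE' k) (norm_nonneg _) h2)
                  (by positivity) h1
        have heq : κ * δ + (κ * θ) * ((κ * (1 - ε))⁻¹ * (κ * θ)) = κ * ε := by
          have hne1 : (1 : ℝ) - ε ≠ 0 := h1ε.ne'
          field_simp
          ring_nf
          ring_nf at key
          nlinarith [key, sq_nonneg κ, hκ0]
        calc ‖Qrec D E (k + 1) - κ • (1 : Matrix (Fin N) (Fin N) ℝ)‖
            = ‖(D (k + 1) - κ • (1 : Matrix (Fin N) (Fin N) ℝ))
                - E k * (Qrec D E k)⁻¹ * (E k)ᵀ‖ := by rw [hstep, sub_right_comm]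
          _ ≤ ‖D (k + 1) - κ • (1 : Matrix (Fin N) (Fin N) ℝ)‖
                + ‖E k * (Qrec D E k)⁻¹ * (E k)ᵀ‖ := norm_sub_le _ _
          _ ≤ κ * δ + (κ * θ) * ((κ * (1 - ε))⁻¹ * (κ * θ)) :=
                add_le_add (hD' (k + 1)) hprod
          _ = κ * ε := heq
  refine ⟨hε1, fun k => ⟨(invlem _ (main k)).1, ?_⟩⟩
  rw [matSpectralNorm_eq_norm hN]
  exact main k
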